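/- Let M = (R,T,c) and M' = (R,T,c') be MRTA instances on the same robots and tasks whose cost functions c and c' are both injective on E, and let (W, a) be the output of the SSI auction on M. Suppose there exists an edge e ∈ E not appearing in W such that c'(f) = c(f) for all f ∈ E ∖ {e}. Then the SSI auction on M' outputs the same winning-edge list and assignment function as the SSI auction on M if and only if c'(e) > max_{k ∈ B_e} c(w_k) (with the condition holding vacuously when B_e = ∅). -/
import Mathlib


open Finset

/-- The set of tasks assigned in the bid rounds with (0-based) index `< k`. -/
def auctionAssigned {V : Type*} [DecidableEq V] {n : ℕ} (w : Fin n → V × V) (k : ℕ) :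
    Finset V :=
  (Finset.univ.filter fun i : Fin n => (i : ℕ) < k).image fun i => (w i).2

/-- `w` is the output of the SSI auction for the instance `(R, T, c)`. -/
def IsAuction {V : Type*} [DecidableEq V] (R T : Finset V) (c : V → V → ℝ) {n : ℕ}
    (w : Fin n → V × V) : Prop :=
  ∀ k : Fin n,
    (w k).1 ∈ R ∪ auctionAssigned w (k : ℕ) ∧
    (w k).2 ∈ T \ auctionAssigned w (k : ℕ) ∧
    ∀ s ∈ R ∪ auctionAssigned w (k : ℕ), ∀ t ∈ T \ auctionAssigned w (k : ℕ),
      (s, t) ≠ w k → c (w k).1 (w k).2 < c s t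

/-- `c` is injective on the edge set of the complete graph. -/
def InjOnEdges {V : Type*} (c : V → V → ℝ) : Prop :=
  ∀ x y x' y' : V, x ≠ y → x' ≠ y' → c x y = c x' y' →
    (x = x' ∧ y = y') ∨ (x = y' ∧ y = x')

/-- The assignment function of the auction: `a v = k` if `v` is the task assigned
in (1-based) round `k`, and `a v = 0` if `v` is never assigned (e.g. a robot). -/
def assignFn {V : Type*} [DecidableEq V] {n : ℕ} (w : Fin n → V × V) (v : V) : ℕ :=
  (Finset.univ.filter fun k : Fin n => (w k).2 = v).sup fun k => (k : ℕ) + 1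

/-- The set `B_e` of (1-based) bid rounds considering the edge `e = {x,y}`:
`B_e = {k : min(a x, a y) < k ≤ max(a x, a y)}`. -/
def bidRounds {V : Type*} (a : V → ℕ) (x y : V) : Finset ℕ :=
  Finset.Ioc (min (a x) (a y)) (max (a x) (a y))

theorem statement6 {V : Type*} [Fintype V] [DecidableEq V] (R T : Finset V)
    (hdisj : Disjoint R T) (hunion : R ∪ T = Finset.univ) (hcard : 3 ≤ Fintype.card V)
    (c c' : V → V → ℝ)
    (hsymm : ∀ x y, c x y = c y x) (hnonneg : ∀ x y, 0 ≤ c x y) (hinj : InjOnEdges c)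
    (hsymm' : ∀ x y, c' x y = c' y x) (hnonneg' : ∀ x y, 0 ≤ c' x y) (hinj' : InjOnEdges c')
    (w : Fin T.card → V × V) (hw : IsAuction R T c w)
    -- the edge `e = {x,y}` does not appear in `W`
    (x y : V) (hxy : x ≠ y)
    (hnotW : ∀ k : Fin T.card, w k ≠ (x, y) ∧ w k ≠ (y, x))
    -- `c'` agrees with `c` on every edge other than `e`
    (hsame : ∀ p q : V, (p, q) ≠ (x, y) → (p, q) ≠ (y, x) → c' p q = c p q) :
    -- the auction on `c'` outputs the same winning-edge list (hence the same
    -- assignment function) iff `c'(e) > max_{k ∈ B_e} c(w_k)` (vacuous if `B_e = ∅`)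
    IsAuction R T c' w ↔
      ∀ k : Fin T.card, ((k : ℕ) + 1) ∈ bidRounds (assignFn w) x y →
        c (w k).1 (w k).2 < c' x y := by
  classical
  have hT2 : ∀ k : Fin T.card, (w k).2 ∈ T ∧ (w k).2 ∉ auctionAssigned w (k : ℕ) :=
    fun k => Finset.mem_sdiff.mp (hw k).2.1
  have hmemA : ∀ (v : V) (m : ℕ),
      v ∈ auctionAssigned w m ↔ ∃ i : Fin T.card, (i : ℕ) < m ∧ (w i).2 = v := by
    intro v m
    simp [auctionAssigned]
  have hinj2 : ∀ i j : Fin T.card, (w i).2 = (w j).2 → i = j := by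
    intro i j hij
    by_contra h
    rcases lt_or_gt_of_ne h with hlt | hlt
    · exact (hT2 j).2 ((hmemA _ _).mpr ⟨i, hlt, hij⟩)
    · exact (hT2 i).2 ((hmemA _ _).mpr ⟨j, hlt, hij.symm⟩)
  have hsurj : ∀ t ∈ T, ∃ j : Fin T.card, (w j).2 = t := by
    intro t ht
    have himg : (Finset.univ.image fun j : Fin T.card => (w j).2) = T := by
      apply Finset.eq_of_subset_of_card_le
      · intro v hv
        simp only [Finset.mem_image, Finset.mem_univ, true_and] at hv
        obtain ⟨j, rfl⟩ := hv
        exact (hT2 j).1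
      · rw [Finset.card_image_of_injective _ (fun i j h => hinj2 i j h)]
        simp
    rw [← himg] at ht
    simpa using ht
  have haw : ∀ j : Fin T.card, assignFn w ((w j).2) = (j : ℕ) + 1 := by
    intro j
    unfold assignFn
    have : (Finset.univ.filter fun k : Fin T.card => (w k).2 = (w j).2) = {j} := by
      ext k
      simp only [Finset.mem_filter, Finset.mem_univ, true_and, Finset.mem_singleton]
      constructor
      · exact fun h => hinj2 _ _ h
      · rintro rfl; rfl
    rw [this]
    simp
  -- status of each vertex
  have hstat : ∀ v : V,
      (v ∈ R ∧ assignFn w v = 0 ∧ ∀ m : ℕ,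
        v ∈ R ∪ auctionAssigned w m ∧ v ∉ T \ auctionAssigned w m) ∨
      (∃ j : Fin T.card, (w j).2 = v ∧ assignFn w v = (j : ℕ) + 1 ∧ ∀ m : ℕ,
        (v ∈ R ∪ auctionAssigned w m ↔ (j : ℕ) < m) ∧
        (v ∈ T \ auctionAssigned w m ↔ m ≤ (j : ℕ))) := by
    intro v
    have hv : v ∈ R ∪ T := by rw [hunion]; exact Finset.mem_univ v
    rcases Finset.mem_union.mp hv with hvR | hvT
    · left
      refine ⟨hvR, ?_, ?_⟩
      · unfold assignFn
        have : (Finset.univ.filter fun k : Fin T.card => (w k).2 = v) = ∅ := by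
          ext k
          simp only [Finset.mem_filter, Finset.mem_univ, true_and, Finset.notMem_empty,
            iff_false]
          intro h
          exact Finset.disjoint_left.mp hdisj hvR (h ▸ (hT2 k).1)
        rw [this]; simp
      · intro m
        constructor
        · exact Finset.mem_union_left _ hvR
        · intro h
          exact Finset.disjoint_left.mp hdisj hvR (Finset.mem_sdiff.mp h).1
    · right
      obtain ⟨j, hj⟩ := hsurj v hvT
      refine ⟨j, hj, hj ▸ haw j, ?_⟩
      intro m
      have hvnR : v ∉ R := fun h => Finset.disjoint_left.mp hdisj h hvT
      have hA : v ∈ auctionAssigned w m ↔ (j : ℕ) < m := by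
        rw [hmemA]
        constructor
        · rintro ⟨i, hi, hiv⟩
          have : i = j := hinj2 i j (hiv.trans hj.symm)
          exact this ▸ hi
        · exact fun h => ⟨j, h, hj⟩
      constructor
      · rw [Finset.mem_union]
        simp [hvnR, hA]
      · rw [Finset.mem_sdiff]
        simp [hvT, hA, Nat.not_lt]
  -- considered ↔ bid round
  have hconsid : ∀ k : Fin T.card,
      ((x ∈ R ∪ auctionAssigned w (k : ℕ) ∧ y ∈ T \ auctionAssigned w (k : ℕ)) ∨
       (y ∈ R ∪ auctionAssigned w (k : ℕ) ∧ x ∈ T \ auctionAssigned w (k : ℕ))) ↔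
      ((k : ℕ) + 1) ∈ bidRounds (assignFn w) x y := by
    intro k
    rcases hstat x with ⟨hxR, hax, hx⟩ | ⟨jx, hjx, hax, hx⟩ <;>
      rcases hstat y with ⟨hyR, hay, hy⟩ | ⟨jy, hjy, hay, hy⟩
    · simp only [bidRounds, hax, hay, Finset.mem_Ioc]
      constructor
      · rintro (⟨_, h⟩ | ⟨_, h⟩)
        · exact absurd h (hy (k : ℕ)).2
        · exact absurd h (hx (k : ℕ)).2
      · omega
    · simp only [bidRounds, hax, hay, Finset.mem_Ioc]
      rw [(hy (k : ℕ)).2]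
      constructor
      · rintro (⟨_, h⟩ | ⟨_, h⟩)
        · omega
        · exact absurd h (hx (k : ℕ)).2
      · intro h
        exact Or.inl ⟨(hx (k : ℕ)).1, by omega⟩
    · simp only [bidRounds, hax, hay, Finset.mem_Ioc]
      rw [(hx (k : ℕ)).2]
      constructor
      · rintro (⟨_, h⟩ | ⟨_, h⟩)
        · exact absurd h (hy (k : ℕ)).2
        · omega
      · intro h
        exact Or.inr ⟨(hy (k : ℕ)).1, by omega⟩
    · have hne : (jx : ℕ) ≠ (jy : ℕ) := by
        intro h
        have hj : jx = jy := Fin.ext h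
        subst hj
        exact hxy (hjx.symm.trans hjy)
      simp only [bidRounds, hax, hay, Finset.mem_Ioc]
      rw [(hx (k : ℕ)).1, (hx (k : ℕ)).2, (hy (k : ℕ)).1, (hy (k : ℕ)).2]
      omega
  have hwk_ne : ∀ k : Fin T.card,
      ((w k).1, (w k).2) ≠ (x, y) ∧ ((w k).1, (w k).2) ≠ (y, x) := by
    intro k
    constructor
    · rw [Prod.mk.eta]; exact (hnotW k).1
    · rw [Prod.mk.eta]; exact (hnotW k).2
  have hcw : ∀ k : Fin T.card, c' (w k).1 (w k).2 = c (w k).1 (w k).2 := fun k =>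
    hsame _ _ (hwk_ne k).1 (hwk_ne k).2
  constructor
  · intro hw' k hk
    rcases (hconsid k).mpr hk with ⟨hxk, hyk⟩ | ⟨hyk, hxk⟩
    · have := (hw' k).2.2 x hxk y hyk (fun h => (hnotW k).1 h.symm)
      rwa [hcw k] at this
    · have := (hw' k).2.2 y hyk x hxk (fun h => (hnotW k).2 h.symm)
      rwa [hcw k, ← hsymm' x y] at this
  · intro h k
    refine ⟨(hw k).1, (hw k).2.1, ?_⟩
    intro s hs t ht hne
    rw [hcw k]
    by_cases h1 : (s, t) = (x, y)
    · injection h1 with h1a h1b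
      subst h1a; subst h1b
      exact h k ((hconsid k).mp (Or.inl ⟨hs, ht⟩))
    · by_cases h2 : (s, t) = (y, x)
      · injection h2 with h2a h2b
        subst h2a; subst h2b
        rw [hsymm' s t]
        exact h k ((hconsid k).mp (Or.inr ⟨hs, ht⟩))
      · rw [hsame s t h1 h2]
        exact (hw k).2.2 s hs t ht hne
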